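/- The function $x \mapsto \frac{\tan x - x}{x^2}$ is increasing on $(0, \pi/2)$. -/

import Mathlib

open Real Set

private lemma tan_deriv' {x : ℝ} (hc : Real.cos x ≠ 0) :
    HasDerivAt Real.tan (1 + Real.tan x ^ 2) x := by
  have h := Real.hasDerivAt_tan hc
  convert h using 1
  rw [one_div, ← Real.inv_one_add_tan_sq hc, inv_inv]

private lemma g_deriv' {x : ℝ} (hc : Real.cos x ≠ 0) :
    HasDerivAt (fun y : ℝ => y * Real.tan y ^ 2 - 2 * Real.tan y + 2 * y)
      (Real.tan x * (2 * x * (1 + Real.tan x ^ 2) - Real.tan x)) x := by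
  have h1 := tan_deriv' hc
  have h2 := ((hasDerivAt_id x).mul (h1.pow 2))
  have h3 := (h2.sub (h1.const_mul 2)).add ((hasDerivAt_id x).const_mul 2)
  refine h3.congr_deriv ?_
  simp only [id_eq, Pi.pow_apply, Nat.cast_ofNat]
  ring

private lemma key_ineq {x : ℝ} (hx : x ∈ Set.Ioo 0 (Real.pi / 2)) :
    Real.tan x < 2 * x * (1 + Real.tan x ^ 2) := by
  have hc : 0 < Real.cos x := Real.cos_pos_of_mem_Ioo
    ⟨by linarith [hx.1, Real.pi_pos], hx.2⟩
  have hs : Real.sin x * Real.cos x < 2 * x := by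
    have h := Real.sin_lt (by linarith [hx.1] : (0:ℝ) < 2 * x)
    rw [Real.sin_two_mul] at h
    have := hx.1
    linarith
  have hp : Real.sin x ^ 2 + Real.cos x ^ 2 = 1 := Real.sin_sq_add_cos_sq x
  rw [Real.tan_eq_sin_div_cos, div_lt_iff₀ hc]
  have h1 : (1 + (Real.sin x / Real.cos x) ^ 2) = 1 / Real.cos x ^ 2 := by
    field_simp
    linarith [hp]
  rw [h1, show 2 * x * (1 / Real.cos x ^ 2) * Real.cos x = 2 * x / Real.cos x from by
    field_simp, lt_div_iff₀ hc]
  linarith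

private lemma g_pos {x : ℝ} (hx : x ∈ Set.Ioo 0 (Real.pi / 2)) :
    0 < x * Real.tan x ^ 2 - 2 * Real.tan x + 2 * x := by
  have hcos : ∀ y ∈ Set.Ico (0:ℝ) (Real.pi / 2), Real.cos y ≠ 0 := fun y hy =>
    (Real.cos_pos_of_mem_Ioo ⟨by linarith [hy.1, Real.pi_pos], hy.2⟩).ne'
  have hmono : StrictMonoOn (fun y : ℝ => y * Real.tan y ^ 2 - 2 * Real.tan y + 2 * y)
      (Set.Ico 0 (Real.pi / 2)) := by
    apply strictMonoOn_of_deriv_pos (convex_Ico _ _)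
    · have hct : ContinuousOn Real.tan (Set.Ico (0:ℝ) (Real.pi / 2)) :=
        Real.continuousOn_tan.mono (fun y hy => hcos y hy)
      exact ((continuousOn_id.mul (hct.pow 2)).sub (hct.const_smul 2)).add
        (continuousOn_id.const_smul 2) |>.congr (fun y _ => by simp)
    · intro y hy
      rw [interior_Ico] at hy
      rw [(g_deriv' (hcos y (Set.Ioo_subset_Ico_self hy))).deriv]
      have ht : 0 < Real.tan y := Real.tan_pos_of_pos_of_lt_pi_div_two hy.1 hy.2
      have := key_ineq hy
      nlinarith
  have h0 : (0:ℝ) ∈ Set.Ico (0:ℝ) (Real.pi / 2) := ⟨le_refl _, by linarith [Real.pi_pos]⟩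
  have hx' : x ∈ Set.Ico (0:ℝ) (Real.pi / 2) := ⟨hx.1.le, hx.2⟩
  have := hmono h0 hx' hx.1
  simpa using this

private lemma f_deriv' {x : ℝ} (hx : x ∈ Set.Ioo 0 (Real.pi / 2)) :
    HasDerivAt (fun y : ℝ => (Real.tan y - y) / y ^ 2)
      ((x * Real.tan x ^ 2 - 2 * Real.tan x + 2 * x) / x ^ 3) x := by
  have hc : Real.cos x ≠ 0 :=
    (Real.cos_pos_of_mem_Ioo ⟨by linarith [hx.1, Real.pi_pos], hx.2⟩).ne'
  have hx0 : x ≠ 0 := hx.1.ne'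
  have h1 := (tan_deriv' hc).sub (hasDerivAt_id x)
  have h2 := (hasDerivAt_id x).pow 2
  have h3 := h1.div h2 (pow_ne_zero 2 hx0)
  refine h3.congr_deriv ?_
  simp only [id_eq, Pi.pow_apply, Pi.sub_apply, Nat.cast_ofNat]
  field_simp
  ring

theorem stmt6 : StrictMonoOn (fun x : ℝ => (Real.tan x - x) / x ^ 2)
    (Set.Ioo 0 (Real.pi / 2)) := by
  apply strictMonoOn_of_deriv_pos (convex_Ioo _ _)
  · exact fun y hy => (f_deriv' hy).continuousAt.continuousWithinAt
  · intro y hy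
    rw [interior_Ioo] at hy
    rw [(f_deriv' hy).deriv]
    exact div_pos (g_pos hy) (pow_pos hy.1 3)
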